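/- Assume (H0) and d₁, d₂, l > 0, let k be a natural number, and assume hypothesis (H3) at mode k: B_k − C_k > 0, −A_k² + 2·B_k + b₁₁² > 0 and (A_k² − 2·B_k − b₁₁²)² > 4·(B_k² − C_k²). Then 0 < ω_k⁻ < ω_k⁺ and the set of positive real roots of the quartic equation ω⁴ + (A_k² − 2·B_k − b₁₁²)·ω² + B_k² − C_k² = 0 is exactly {ω_k⁻, ω_k⁺}. -/
import Mathlib
set_option maxHeartbeats 1000000


open Real

/-- Δ = M² − 4·K·(a·m + c·p)·(a·r₂ + c·d − c·r₀) with M = a·m + c·p + K·(a·r₂ + c·d). -/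
noncomputable def Delta (r₀ r₂ K d a p c m : ℝ) : ℝ :=
  (a*m + c*p + K*(a*r₂ + c*d))^2 - 4*K*(a*m + c*p)*(a*r₂ + c*d - c*r₀)

/-- The positive equilibrium predator density v⋆. -/
noncomputable def vstar (r₀ r₂ K d a p c m : ℝ) : ℝ :=
  (-(a*m + c*p + K*(a*r₂ + c*d)) + Real.sqrt (Delta r₀ r₂ K d a p c m)) / (2*K*(a*m + c*p))

/-- The positive equilibrium prey density u⋆ = (r₂ + m·v⋆)/c. -/
noncomputable def ustar (r₀ r₂ K d a p c m : ℝ) : ℝ := (r₂ + m * vstar r₀ r₂ K d a p c m) / c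

/-- Linearization coefficient a₁₂. -/
noncomputable def a12 (r₀ r₂ K d a p c m : ℝ) : ℝ :=
  -K*r₀*ustar r₀ r₂ K d a p c m / (1 + K*vstar r₀ r₂ K d a p c m)^2 - p*ustar r₀ r₂ K d a p c m

/-- Linearization coefficient a₂₁. -/
noncomputable def a21 (r₀ r₂ K d a p c m : ℝ) : ℝ := c * vstar r₀ r₂ K d a p c m

/-- Linearization coefficient a₂₂. -/
noncomputable def a22 (r₀ r₂ K d a p c m : ℝ) : ℝ := -m * vstar r₀ r₂ K d a p c m

/-- Linearization coefficient b₁₁. -/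
noncomputable def b11 (r₀ r₂ K d a p c m : ℝ) : ℝ := -a * ustar r₀ r₂ K d a p c m

/-- A_k = (d₁ + d₂)·k²/l² − a₂₂. -/
noncomputable def Ak (r₀ r₂ K d a p c m d₁ d₂ l : ℝ) (k : ℕ) : ℝ :=
  (d₁ + d₂)*(k:ℝ)^2/l^2 - a22 r₀ r₂ K d a p c m

/-- B_k = d₁·d₂·k⁴/l⁴ − a₂₂·d₁·k²/l² − a₁₂·a₂₁. -/
noncomputable def Bk (r₀ r₂ K d a p c m d₁ d₂ l : ℝ) (k : ℕ) : ℝ :=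
  d₁*d₂*(k:ℝ)^4/l^4 - a22 r₀ r₂ K d a p c m * d₁*(k:ℝ)^2/l^2 - a12 r₀ r₂ K d a p c m * a21 r₀ r₂ K d a p c m

/-- C_k = −b₁₁·d₂·k²/l² + a₂₂·b₁₁. -/
noncomputable def Ck (r₀ r₂ K d a p c m d₁ d₂ l : ℝ) (k : ℕ) : ℝ :=
  -(b11 r₀ r₂ K d a p c m)*d₂*(k:ℝ)^2/l^2 + a22 r₀ r₂ K d a p c m * b11 r₀ r₂ K d a p c m

/-- ω_k⁺. -/
noncomputable def omegaP (r₀ r₂ K d a p c m d₁ d₂ l : ℝ) (k : ℕ) : ℝ :=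
  Real.sqrt ((-(Ak r₀ r₂ K d a p c m d₁ d₂ l k)^2 + 2*Bk r₀ r₂ K d a p c m d₁ d₂ l k + (b11 r₀ r₂ K d a p c m)^2
    + Real.sqrt (((Ak r₀ r₂ K d a p c m d₁ d₂ l k)^2 - 2*Bk r₀ r₂ K d a p c m d₁ d₂ l k - (b11 r₀ r₂ K d a p c m)^2)^2
      - 4*((Bk r₀ r₂ K d a p c m d₁ d₂ l k)^2 - (Ck r₀ r₂ K d a p c m d₁ d₂ l k)^2))) / 2)

/-- ω_k⁻. -/
noncomputable def omegaM (r₀ r₂ K d a p c m d₁ d₂ l : ℝ) (k : ℕ) : ℝ :=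
  Real.sqrt ((-(Ak r₀ r₂ K d a p c m d₁ d₂ l k)^2 + 2*Bk r₀ r₂ K d a p c m d₁ d₂ l k + (b11 r₀ r₂ K d a p c m)^2
    - Real.sqrt (((Ak r₀ r₂ K d a p c m d₁ d₂ l k)^2 - 2*Bk r₀ r₂ K d a p c m d₁ d₂ l k - (b11 r₀ r₂ K d a p c m)^2)^2
      - 4*((Bk r₀ r₂ K d a p c m d₁ d₂ l k)^2 - (Ck r₀ r₂ K d a p c m d₁ d₂ l k)^2))) / 2)

/-- Hypothesis (H3) at mode k. -/
def H3 (r₀ r₂ K d a p c m d₁ d₂ l : ℝ) (k : ℕ) : Prop :=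
  Bk r₀ r₂ K d a p c m d₁ d₂ l k - Ck r₀ r₂ K d a p c m d₁ d₂ l k > 0 ∧ -(Ak r₀ r₂ K d a p c m d₁ d₂ l k)^2 + 2*Bk r₀ r₂ K d a p c m d₁ d₂ l k + (b11 r₀ r₂ K d a p c m)^2 > 0 ∧
    ((Ak r₀ r₂ K d a p c m d₁ d₂ l k)^2 - 2*Bk r₀ r₂ K d a p c m d₁ d₂ l k - (b11 r₀ r₂ K d a p c m)^2)^2 > 4*((Bk r₀ r₂ K d a p c m d₁ d₂ l k)^2 - (Ck r₀ r₂ K d a p c m d₁ d₂ l k)^2)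


lemma quartic_key (s q wm wp : ℝ) (hs : s < 0) (hq : 0 < q) (hD : 4*q < s^2)
    (hwm : wm = Real.sqrt ((-s - Real.sqrt (s^2 - 4*q))/2))
    (hwp : wp = Real.sqrt ((-s + Real.sqrt (s^2 - 4*q))/2)) :
    0 < wm ∧ wm < wp ∧ {ω : ℝ | 0 < ω ∧ ω^4 + s*ω^2 + q = 0} = {wm, wp} := by
  have hDpos : 0 < s^2 - 4*q := by linarith
  set sD := Real.sqrt (s^2 - 4*q) with hsD
  have hsD0 : 0 < sD := Real.sqrt_pos.mpr hDpos
  have hsDsq : sD^2 = s^2 - 4*q := Real.sq_sqrt hDpos.le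
  have hsDlt : sD < -s := by
    rw [hsD]
    refine (Real.sqrt_lt' (by linarith)).mpr ?_
    nlinarith
  have hxm : 0 < (-s - sD)/2 := by linarith
  have hxp : 0 < (-s + sD)/2 := by linarith
  have hwm0 : 0 < wm := by rw [hwm]; exact Real.sqrt_pos.mpr hxm
  have hwp0 : 0 < wp := by rw [hwp]; exact Real.sqrt_pos.mpr hxp
  have hwmsq : wm^2 = (-s - sD)/2 := by rw [hwm]; exact Real.sq_sqrt hxm.le
  have hwpsq : wp^2 = (-s + sD)/2 := by rw [hwp]; exact Real.sq_sqrt hxp.le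
  refine ⟨hwm0, ?_, ?_⟩
  · rw [hwm, hwp]; exact Real.sqrt_lt_sqrt (by linarith) (by linarith)
  · ext ω
    simp only [Set.mem_setOf_eq, Set.mem_insert_iff, Set.mem_singleton_iff]
    constructor
    · rintro ⟨hω, heq⟩
      have hfac : (ω^2 - (-s - sD)/2) * (ω^2 - (-s + sD)/2) = 0 := by
        linear_combination heq - (1/4)*hsDsq
      rcases mul_eq_zero.mp hfac with h | h
      · left
        have h2 : ω^2 = wm^2 := by rw [hwmsq]; linarith
        rw [← Real.sqrt_sq hω.le, h2, Real.sqrt_sq hwm0.le]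
      · right
        have h2 : ω^2 = wp^2 := by rw [hwpsq]; linarith
        rw [← Real.sqrt_sq hω.le, h2, Real.sqrt_sq hwp0.le]
    · rintro (rfl | rfl)
      · exact ⟨hwm0, by linear_combination (ω^2 + (-s - sD)/2 + s) * hwmsq + (1/4)*hsDsq⟩
      · exact ⟨hwp0, by linear_combination (ω^2 + (-s + sD)/2 + s) * hwpsq + (1/4)*hsDsq⟩

theorem stmt12 (r₀ r₂ K d a p c m d₁ d₂ l : ℝ) (hr₀ : 0 < r₀) (hr₂ : 0 < r₂) (hK : 0 < K) (hd : 0 < d) (ha : 0 < a) (hp : 0 < p) (hc : 0 < c) (hm : 0 < m)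
    (hd₁ : 0 < d₁) (hd₂ : 0 < d₂) (hl : 0 < l)
    (hH0 : a*r₂ + c*d - c*r₀ < 0) (k : ℕ) (hH3 : H3 r₀ r₂ K d a p c m d₁ d₂ l k) :
    0 < omegaM r₀ r₂ K d a p c m d₁ d₂ l k ∧ omegaM r₀ r₂ K d a p c m d₁ d₂ l k < omegaP r₀ r₂ K d a p c m d₁ d₂ l k ∧
    {ω : ℝ | 0 < ω ∧
      ω^4 + ((Ak r₀ r₂ K d a p c m d₁ d₂ l k)^2 - 2*Bk r₀ r₂ K d a p c m d₁ d₂ l k - (b11 r₀ r₂ K d a p c m)^2)*ω^2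
        + (Bk r₀ r₂ K d a p c m d₁ d₂ l k)^2 - (Ck r₀ r₂ K d a p c m d₁ d₂ l k)^2 = 0}
      = {omegaM r₀ r₂ K d a p c m d₁ d₂ l k, omegaP r₀ r₂ K d a p c m d₁ d₂ l k}  := by
  obtain ⟨h31, h32, h33⟩ := hH3
  -- positivity of vstar
  have hM : 0 < a*m + c*p + K*(a*r₂ + c*d) := by positivity
  have hΔ : (a*m + c*p + K*(a*r₂ + c*d))^2 < Delta r₀ r₂ K d a p c m := by
    unfold Delta
    nlinarith [mul_pos (mul_pos hK (show (0:ℝ) < a*m + c*p by positivity))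
      (show (0:ℝ) < -(a*r₂ + c*d - c*r₀) by linarith)]
  have hsqrtΔ : a*m + c*p + K*(a*r₂ + c*d) < Real.sqrt (Delta r₀ r₂ K d a p c m) :=
    (Real.lt_sqrt hM.le).mpr hΔ
  have hv : 0 < vstar r₀ r₂ K d a p c m := by
    unfold vstar
    apply div_pos (by linarith) (by positivity)
  have hu : 0 < ustar r₀ r₂ K d a p c m := by
    unfold ustar
    have := mul_pos hm hv
    apply div_pos (by linarith) hc
  have ha22 : a22 r₀ r₂ K d a p c m < 0 := by
    unfold a22; nlinarith
  have hb11 : b11 r₀ r₂ K d a p c m < 0 := by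
    unfold b11; nlinarith
  have ha21 : 0 < a21 r₀ r₂ K d a p c m := by
    unfold a21; positivity
  have ha12 : a12 r₀ r₂ K d a p c m < 0 := by
    unfold a12
    have h0 : 0 < 1 + K * vstar r₀ r₂ K d a p c m := by nlinarith
    have h1 : -K*r₀*ustar r₀ r₂ K d a p c m / (1 + K*vstar r₀ r₂ K d a p c m)^2 < 0 :=
      div_neg_of_neg_of_pos (by nlinarith [mul_pos (mul_pos hK hr₀) hu]) (by positivity)
    linarith [h1, mul_pos hp hu]
  have hk2 : (0:ℝ) ≤ (k:ℝ)^2/l^2 := by positivity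
  have hB : 0 < Bk r₀ r₂ K d a p c m d₁ d₂ l k := by
    unfold Bk
    have e1 : (0:ℝ) ≤ d₁*d₂*(k:ℝ)^4/l^4 := by positivity
    have e2 : a22 r₀ r₂ K d a p c m * d₁*(k:ℝ)^2/l^2 ≤ 0 := by
      apply div_nonpos_of_nonpos_of_nonneg ?_ (by positivity)
      have := mul_nonneg (mul_nonneg (neg_nonneg.mpr ha22.le) hd₁.le) (sq_nonneg ((k:ℝ)))
      nlinarith
    have e3 : 0 < (-(a12 r₀ r₂ K d a p c m))*(a21 r₀ r₂ K d a p c m) :=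
      mul_pos (by linarith) ha21
    nlinarith
  have hC : 0 < Ck r₀ r₂ K d a p c m d₁ d₂ l k := by
    unfold Ck
    have e1 : (0:ℝ) ≤ -(b11 r₀ r₂ K d a p c m)*d₂*(k:ℝ)^2/l^2 :=
      div_nonneg (mul_nonneg (mul_nonneg (neg_nonneg.mpr hb11.le) hd₂.le) (sq_nonneg ((k:ℝ)))) (by positivity)
    have e2 : 0 < a22 r₀ r₂ K d a p c m * b11 r₀ r₂ K d a p c m :=
      mul_pos_of_neg_of_neg ha22 hb11
    linarith
  have hq : 0 < (Bk r₀ r₂ K d a p c m d₁ d₂ l k)^2 - (Ck r₀ r₂ K d a p c m d₁ d₂ l k)^2 := by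
    nlinarith
  have hT : ((Ak r₀ r₂ K d a p c m d₁ d₂ l k)^2 - 2*Bk r₀ r₂ K d a p c m d₁ d₂ l k - (b11 r₀ r₂ K d a p c m)^2)^2
      - 4*((Bk r₀ r₂ K d a p c m d₁ d₂ l k)^2 - (Ck r₀ r₂ K d a p c m d₁ d₂ l k)^2)
      = ((Ak r₀ r₂ K d a p c m d₁ d₂ l k)^2 - 2*Bk r₀ r₂ K d a p c m d₁ d₂ l k - (b11 r₀ r₂ K d a p c m)^2)^2
      - 4*((Bk r₀ r₂ K d a p c m d₁ d₂ l k)^2 - (Ck r₀ r₂ K d a p c m d₁ d₂ l k)^2) := rfl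
  obtain ⟨h1, h2, h3⟩ := quartic_key
    ((Ak r₀ r₂ K d a p c m d₁ d₂ l k)^2 - 2*Bk r₀ r₂ K d a p c m d₁ d₂ l k - (b11 r₀ r₂ K d a p c m)^2)
    ((Bk r₀ r₂ K d a p c m d₁ d₂ l k)^2 - (Ck r₀ r₂ K d a p c m d₁ d₂ l k)^2)
    (omegaM r₀ r₂ K d a p c m d₁ d₂ l k) (omegaP r₀ r₂ K d a p c m d₁ d₂ l k)
    (by linarith) hq (by linarith)
    (by unfold omegaM; congr 1; ring)
    (by unfold omegaP; congr 1; ring)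
  refine ⟨h1, h2, ?_⟩
  rw [← h3]
  ext ω
  simp only [Set.mem_setOf_eq]
  constructor
  · rintro ⟨hω, he⟩; exact ⟨hω, by linarith⟩
  · rintro ⟨hω, he⟩; exact ⟨hω, by linarith⟩
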